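/- For any ensemble consisting of a finite index set J, a probability vector p on J, and density matrices σ_j on ℂ^N with ρ = ∑_j p_j σ_j, the mutual information of the computational-basis measurement satisfies the lower bound S(ρ) − H(Y|J) ≤ I(J;Y), where H(Y|J) = H(J,Y) − H(J) = ∑_j p_j H(diag σ_j); the gap between I(J;Y) and this lower bound equals the relative entropy of coherence C(ρ) = H(diag ρ) − S(ρ). -/

import Mathlib

open Finset Matrix
open scoped Classical ComplexOrder

/-- Shannon entropy (base 2) of a vector of reals, with the convention `0 · log₂ 0 = 0`. -/
noncomputable def shEntropy {α : Type*} [Fintype α] (q : α → ℝ) : ℝ :=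
  -∑ a, q a * Real.logb 2 (q a)

/-- Von Neumann entropy (base 2) of a Hermitian matrix, via its eigenvalues. -/
noncomputable def vnEntropy {α : Type*} [Fintype α] [DecidableEq α]
    (ρ : Matrix α α ℂ) : ℝ :=
  if h : ρ.IsHermitian then -∑ i, h.eigenvalues i * Real.logb 2 (h.eigenvalues i)
  else 0

/-- Mutual information `I(J;Y) = H(J) + H(Y) - H(J,Y)` between the index of an ensemble
`{p_j, σ_j}` and the outcome of the computational-basis measurement, whose joint
distribution is `Pr(J = j, Y = y) = p_j (σ_j)_{yy}`. -/
noncomputable def mutualInfoEnsemble {J α : Type*} [Fintype J] [Fintype α]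
    (p : J → ℝ) (σ : J → Matrix α α ℂ) : ℝ :=
  shEntropy p + shEntropy (fun y => ∑ j, p j * (σ j y y).re)
    - shEntropy (fun jy : J × α => p jy.1 * (σ jy.1 jy.2 jy.2).re)


section Aux
variable {N : ℕ}

private lemma diag_re_eq {ρ : Matrix (Fin N) (Fin N) ℂ} (h : ρ.IsHermitian) (y : Fin N) :
    (ρ y y).re = ∑ i, h.eigenvalues i * Complex.normSq (h.eigenvectorUnitary.1 y i) := by
  conv_lhs => rw [h.spectral_theorem, Unitary.conjStarAlgAut_apply]
  simp only [Matrix.mul_apply, diagonal_apply, Function.comp_apply, mul_ite, mul_zero,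
    Finset.sum_ite_eq', Finset.mem_univ, if_pos, Matrix.star_apply]
  rw [Complex.re_sum]
  refine Finset.sum_congr rfl fun i _ => ?_
  simp [Complex.star_def, Complex.mul_re, Complex.normSq_apply]
  ring

private lemma row_sum {ρ : Matrix (Fin N) (Fin N) ℂ} (h : ρ.IsHermitian) (y : Fin N) :
    ∑ i, Complex.normSq (h.eigenvectorUnitary.1 y i) = 1 := by
  have h1 : (h.eigenvectorUnitary.1 * star h.eigenvectorUnitary.1) y y = 1 := by
    rw [(Matrix.mem_unitaryGroup_iff).mp h.eigenvectorUnitary.2]; simp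
  have := congrArg Complex.re h1
  rw [Matrix.mul_apply, Complex.re_sum] at this
  simpa [Matrix.star_apply, Complex.star_def, Complex.mul_re, Complex.normSq_apply,
    mul_comm] using this

private lemma col_sum {ρ : Matrix (Fin N) (Fin N) ℂ} (h : ρ.IsHermitian) (i : Fin N) :
    ∑ y, Complex.normSq (h.eigenvectorUnitary.1 y i) = 1 := by
  have h1 : (star h.eigenvectorUnitary.1 * h.eigenvectorUnitary.1) i i = 1 := by
    rw [(Matrix.mem_unitaryGroup_iff').mp h.eigenvectorUnitary.2]; simp
  have := congrArg Complex.re h1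
  rw [Matrix.mul_apply, Complex.re_sum] at this
  simpa [Matrix.star_apply, Complex.star_def, Complex.mul_re, Complex.normSq_apply,
    mul_comm] using this

private lemma neg_sum_logb {α : Type*} [Fintype α] (f : α → ℝ) :
    -∑ a, f a * Real.logb 2 (f a) = (∑ a, Real.negMulLog (f a)) / Real.log 2 := by
  rw [Finset.sum_div, ← Finset.sum_neg_distrib]
  exact Finset.sum_congr rfl fun a _ => by rw [Real.negMulLog, Real.logb]; ring

/-- Von Neumann entropy is at most the Shannon entropy of the diagonal. -/
private lemma vn_le_diag {ρ : Matrix (Fin N) (Fin N) ℂ} (hρ : ρ.PosSemidef) :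
    vnEntropy ρ ≤ shEntropy (fun y => (ρ y y).re) := by
  have h := hρ.1
  rw [vnEntropy, dif_pos h, shEntropy, neg_sum_logb, neg_sum_logb]
  have hlog : (0:ℝ) < Real.log 2 := Real.log_pos (by norm_num)
  apply div_le_div_of_nonneg_right ?_ hlog.le
  calc ∑ i, Real.negMulLog (h.eigenvalues i)
      = ∑ i, (∑ y, Complex.normSq (h.eigenvectorUnitary.1 y i))
          * Real.negMulLog (h.eigenvalues i) := by
        refine Finset.sum_congr rfl fun i _ => by rw [col_sum h i, one_mul]
    _ = ∑ y, ∑ i, Complex.normSq (h.eigenvectorUnitary.1 y i)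
          * Real.negMulLog (h.eigenvalues i) := by
        rw [Finset.sum_comm]; simp [Finset.sum_mul]
    _ ≤ ∑ y, Real.negMulLog ((ρ y y).re) := by
        refine Finset.sum_le_sum fun y _ => ?_
        rw [diag_re_eq h y]
        have := Real.concaveOn_negMulLog.le_map_sum
          (t := Finset.univ) (w := fun i => Complex.normSq (h.eigenvectorUnitary.1 y i))
          (p := h.eigenvalues)
          (fun i _ => Complex.normSq_nonneg _) (row_sum h y)
          (fun i _ => hρ.eigenvalues_nonneg i)
        simpa [smul_eq_mul, mul_comm] using this

private lemma mul_logb_mul (a b : ℝ) :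
    a * b * Real.logb 2 (a * b) = b * (a * Real.logb 2 a) + a * (b * Real.logb 2 b) := by
  rcases eq_or_ne a 0 with ha | ha
  · simp [ha]
  rcases eq_or_ne b 0 with hb | hb
  · simp [hb]
  rw [Real.logb_mul ha hb]; ring

/-- Chain rule for Shannon entropy of a joint distribution `p_j q_{j,y}`. -/
private lemma chain_rule {J : Type*} [Fintype J]
    (p : J → ℝ) (q : J → Fin N → ℝ) (hq1 : ∀ j, ∑ y, q j y = 1) :
    shEntropy (fun jy : J × Fin N => p jy.1 * q jy.1 jy.2)
      = shEntropy p + ∑ j, p j * shEntropy (q j) := by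
  simp only [shEntropy]
  rw [Fintype.sum_prod_type]
  have key : ∀ j, ∑ y, p j * q j y * Real.logb 2 (p j * q j y)
      = p j * Real.logb 2 (p j) + p j * ∑ y, q j y * Real.logb 2 (q j y) := by
    intro j
    rw [Finset.sum_congr rfl fun y _ => mul_logb_mul (p j) (q j y),
      Finset.sum_add_distrib, ← Finset.sum_mul, hq1 j, one_mul, ← Finset.mul_sum]
  rw [Finset.sum_congr rfl fun j _ => key j, Finset.sum_add_distrib]
  simp [Finset.mul_sum, mul_neg, Finset.sum_neg_distrib]
  ring

end Aux

/-- Lower bound on the mutual information of the computational-basis measurement: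
`S(ρ) − H(Y|J) ≤ I(J;Y)`, where `H(Y|J) = H(J,Y) − H(J) = ∑_j p_j H(diag σ_j)`, and the
gap between `I(J;Y)` and the lower bound is the relative entropy of coherence
`C(ρ) = H(diag ρ) − S(ρ)`. -/
theorem mutual_info_lower_bound_coherence {J : Type*} [Fintype J] {N : ℕ}
    (p : J → ℝ) (hp0 : ∀ j, 0 ≤ p j) (hp1 : ∑ j, p j = 1)
    (σ : J → Matrix (Fin N) (Fin N) ℂ)
    (hpsd : ∀ j, (σ j).PosSemidef) (htr : ∀ j, (σ j).trace = 1) :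
    let ρ : Matrix (Fin N) (Fin N) ℂ := ∑ j, p j • σ j
    -- H(Y|J) = H(J,Y) − H(J)
    let HYgJ : ℝ :=
      shEntropy (fun jy : J × Fin N => p jy.1 * (σ jy.1 jy.2 jy.2).re) - shEntropy p
    HYgJ = ∑ j, p j * shEntropy (fun y => (σ j y y).re) ∧
      vnEntropy ρ - HYgJ ≤ mutualInfoEnsemble p σ ∧
      mutualInfoEnsemble p σ - (vnEntropy ρ - HYgJ) =
        shEntropy (fun y => (ρ y y).re) - vnEntropy ρ := by
  intro ρ HYgJ
  have hq1 : ∀ j, ∑ y, (σ j y y).re = 1 := by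
    intro j
    have := congrArg Complex.re (htr j)
    rwa [Matrix.trace, Complex.re_sum, Complex.one_re] at this
  have hchain := chain_rule p (fun j y => (σ j y y).re) hq1
  have h1 : HYgJ = ∑ j, p j * shEntropy (fun y => (σ j y y).re) := by
    simp only [HYgJ, hchain]; ring
  have hdiag : ∀ y, (ρ y y).re = ∑ j, p j * (σ j y y).re := by
    intro y
    simp [ρ, Matrix.sum_apply, Complex.re_sum, Complex.real_smul, Complex.mul_re]
  have hsmul : ∀ j, (p j • σ j).PosSemidef := by
    intro j
    constructor
    · show (p j • σ j)ᴴ = p j • σ j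
      rw [conjTranspose_smul, star_trivial, (hpsd j).1.eq]
    · intro x
      exact ((hpsd j).smul (hp0 j)).2 x
  have hρ : ρ.PosSemidef := by
    have : ∀ s : Finset J, (∑ j ∈ s, p j • σ j).PosSemidef := by
      intro s
      induction s using Finset.induction_on with
      | empty => simpa using Matrix.PosSemidef.zero
      | @insert a s ha ih => rw [Finset.sum_insert ha]; exact (hsmul a).add ih
    exact this Finset.univ
  have hvn := vn_le_diag hρ
  have hmarg : shEntropy (fun y => ∑ j, p j * (σ j y y).re)
      = shEntropy (fun y => (ρ y y).re) := by
    congr 1; funext y; rw [hdiag y]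
  refine ⟨h1, ?_, ?_⟩
  · rw [mutualInfoEnsemble, hmarg]
    simp only [HYgJ]
    linarith
  · rw [mutualInfoEnsemble, hmarg]
    simp only [HYgJ]
    ring
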